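/- Let V and W be pointwise finite-dimensional rank-maximal persistence modules over ℝ^d with bounded support, let M bound their pointwise dimensions, and let ε > 0. Then ε satisfies rk_V(I^{+ε}) ≤ rk_W(I) and rk_W(I^{+ε}) ≤ rk_V(I) for all segments I (i.e. ε is a feasible erosion for the pair (rk_V, rk_W)) if and only if for every i ∈ {1, …, M}, ε is a feasible erosion for the pair (rk_{V^(i)}, rk_{W^(i)}) of superlevel modules. -/

import Mathlib

open CategoryTheory CategoryTheory.Limits

noncomputable section

/-- Two elements `p q` of a subset `S` of a poset are order-connected in `S` if there is a
finite sequence of elements of `S` from `p` to `q` with consecutive terms comparable. -/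
def OrderConnIn {P : Type} [PartialOrder P] (S : Set P) (p q : P) : Prop :=
  p ∈ S ∧ Relation.ReflTransGen (fun a b => b ∈ S ∧ (a ≤ b ∨ b ≤ a)) p q

/-- A subset `S` of a poset is convex if `p ≤ r ≤ q` with `p, q ∈ S` implies `r ∈ S`. -/
def IsConvexSubset {P : Type} [PartialOrder P] (S : Set P) : Prop :=
  ∀ ⦃p r q : P⦄, p ∈ S → q ∈ S → p ≤ r → r ≤ q → r ∈ S

/-- An interval of a poset: a convex subset any two of whose elements are order-connected. -/
def IsPosetInterval {P : Type} [PartialOrder P] (S : Set P) : Prop :=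
  IsConvexSubset S ∧ ∀ p ∈ S, ∀ q ∈ S, OrderConnIn S p q

open Classical in
/-- The submodule of `F` which is everything at points of `I` and zero elsewhere. -/
def indSub (F : Type) [Field F] {P : Type} (I : Set P) (p : P) : Submodule F F :=
  if p ∈ I then ⊤ else ⊥

open Classical in
/-- The canonical map between submodules of `F`: the inclusion when it exists, zero otherwise. -/
def indMap (F : Type) [Field F] (S T : Submodule F F) : S →ₗ[F] T :=
  if h : S ≤ T then Submodule.inclusion h else 0

theorem indSub_subsingleton {F : Type} [Field F] {P : Type} {I : Set P} {p : P}
    (hp : p ∉ I) : Subsingleton (indSub F I p) := by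
  rw [indSub, if_neg hp]
  infer_instance

theorem indMap_comp (F : Type) [Field F] {P : Type} [PartialOrder P] {I : Set P}
    (hI : IsConvexSubset I) {p q r : P} (hpq : p ≤ q) (hqr : q ≤ r) :
    (indMap F (indSub F I q) (indSub F I r)).comp (indMap F (indSub F I p) (indSub F I q))
      = indMap F (indSub F I p) (indSub F I r) := by
  by_cases hp : p ∈ I
  · by_cases hr : r ∈ I
    · have hq : q ∈ I := hI hp hr hpq hqr
      have h1 : indSub F I p ≤ indSub F I q := by simp [indSub, hp, hq]
      have h2 : indSub F I q ≤ indSub F I r := by simp [indSub, hq, hr]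
      have h3 : indSub F I p ≤ indSub F I r := h1.trans h2
      simp only [indMap, dif_pos h1, dif_pos h2, dif_pos h3]
      ext x
      rfl
    · haveI := indSub_subsingleton (F := F) (I := I) hr
      exact LinearMap.ext fun x => Subsingleton.elim _ _
  · haveI := indSub_subsingleton (F := F) (I := I) hp
    apply LinearMap.ext
    intro x
    rw [Subsingleton.elim x 0]
    simp

/-- The indicator persistence module of a convex subset `I` of a poset `P`: it assigns `F` to
points of `I` and `0` to other points, with identity structure maps between points of `I` and
zero maps otherwise. -/
def indicatorModule (F : Type) [Field F] {P : Type} [PartialOrder P] (I : Set P)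
    (hI : IsConvexSubset I) : P ⥤ ModuleCat.{0} F where
  obj p := ModuleCat.of F (indSub F I p)
  map {p q} f := ModuleCat.ofHom (indMap F (indSub F I p) (indSub F I q))
  map_id p := by
    apply ModuleCat.hom_ext
    change indMap F (indSub F I p) (indSub F I p) = LinearMap.id
    simp only [indMap, dif_pos le_rfl]
    ext x
    rfl
  map_comp {p q r} f g := by
    apply ModuleCat.hom_ext
    change indMap F (indSub F I p) (indSub F I r) = (indMap F (indSub F I q) (indSub F I r)).comp
      (indMap F (indSub F I p) (indSub F I q))
    rw [indMap_comp F hI f.le g.le]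

/-- The support of a persistence module: the points where it is nonzero. -/
def suppMod (F : Type) [Field F] {P : Type} [PartialOrder P] (V : P ⥤ ModuleCat.{0} F) :
    Set P := {p | Nontrivial (V.obj p)}

/-- The rank of the structure map of `V` associated to `p ≤ q`. -/
def rankMap (F : Type) [Field F] {P : Type} [PartialOrder P] (V : P ⥤ ModuleCat.{0} F)
    {p q : P} (h : p ≤ q) : ℕ :=
  Module.finrank F (LinearMap.range (V.map (homOfLE h)).hom)

/-- A persistence module is antichain-decomposable if it is isomorphic to a direct sum of
indicator modules of intervals whose elements are pairwise incomparable across distinct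
summands. -/
def IsACD (F : Type) [Field F] {P : Type} [PartialOrder P] (V : P ⥤ ModuleCat.{0} F) : Prop :=
  ∃ (A : Type) (S : A → Set P) (hS : ∀ α, IsPosetInterval (S α)),
    (∀ ⦃α β : A⦄, α ≠ β → ∀ p ∈ S α, ∀ q ∈ S β, ¬ p ≤ q ∧ ¬ q ≤ p) ∧
    Nonempty (V ≅ ∐ fun α => indicatorModule F (S α) (hS α).1)

/-- A persistence module is thin if it is pointwise of dimension `0` or `1`. -/
def IsThin (F : Type) [Field F] {P : Type} [PartialOrder P] (V : P ⥤ ModuleCat.{0} F) : Prop :=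
  ∀ p : P, Module.rank F (V.obj p) = 0 ∨ Module.rank F (V.obj p) = 1

/-- We regard `ℝ^d` (with the product order) as a poset category. -/
instance (d : ℕ) : CategoryTheory.Category (Fin d → ℝ) := Preorder.smallCategory _

open Classical in
/-- The rank invariant of `V` on the segment `[p, q]` (junk value `0` when `¬ p ≤ q`). -/
def rkInv (F : Type) [Field F] {d : ℕ} (V : (Fin d → ℝ) ⥤ ModuleCat.{0} F)
    (p q : Fin d → ℝ) : ℕ :=
  if h : p ≤ q then Module.finrank F (LinearMap.range (V.map (homOfLE h)).hom) else 0

/-- The rank invariant of `V` on the `ε`-thickening `[p - ε𝟙, q + ε𝟙]` of the segment `[p, q]`. -/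
def rkShift (F : Type) [Field F] {d : ℕ} (V : (Fin d → ℝ) ⥤ ModuleCat.{0} F) (ε : ℝ)
    (p q : Fin d → ℝ) : ℕ :=
  rkInv F V (fun i => p i - ε) (fun i => q i + ε)

/-- `ε` is a feasible erosion for the pair `(rk_V, rk_W)`: for every segment `[p, q]`,
`rk_V([p, q]^{+ε}) ≤ rk_W([p, q])` and `rk_W([p, q]^{+ε}) ≤ rk_V([p, q])`. -/
def Feasible (F : Type) [Field F] {d : ℕ} (V W : (Fin d → ℝ) ⥤ ModuleCat.{0} F) (ε : ℝ) :
    Prop :=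
  ∀ p q : Fin d → ℝ, p ≤ q →
    rkShift F V ε p q ≤ rkInv F W p q ∧ rkShift F W ε p q ≤ rkInv F V p q

/-- The erosion distance between the rank invariants of `V` and `W`. -/
def erosionDist (F : Type) [Field F] {d : ℕ} (V W : (Fin d → ℝ) ⥤ ModuleCat.{0} F) : ℝ :=
  sInf {ε : ℝ | 0 < ε ∧ Feasible F V W ε}

/-- `ℰ_{V,W}(I)` for the segment `I = [p, q]`. -/
def erosionPair (F : Type) [Field F] {d : ℕ} (V W : (Fin d → ℝ) ⥤ ModuleCat.{0} F)
    (p q : Fin d → ℝ) : ℝ :=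
  sInf {ε : ℝ | 0 < ε ∧ rkShift F V ε p q ≤ rkInv F W p q ∧ rkShift F W ε p q ≤ rkInv F V p q}

/-- `ℰ_V(I)` for the segment `I = [p, q]`. -/
def erosionOne (F : Type) [Field F] {d : ℕ} (V : (Fin d → ℝ) ⥤ ModuleCat.{0} F)
    (p q : Fin d → ℝ) : ℝ :=
  sInf {ε : ℝ | 0 < ε ∧ rkShift F V ε p q = 0}

/-- The segment `[p, q]` belongs to `Seg_{V,W}`, i.e. `rk_V([p, q]) = 1` and
`rk_W([p, q]) = 0`. -/
def SegMem (F : Type) [Field F] {d : ℕ} (V W : (Fin d → ℝ) ⥤ ModuleCat.{0} F)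
    (p q : Fin d → ℝ) : Prop :=
  p ≤ q ∧ rkInv F V p q = 1 ∧ rkInv F W p q = 0

/-- `V(u) ≅ F`. -/
def ptIsLine (F : Type) [Field F] {d : ℕ} (V : (Fin d → ℝ) ⥤ ModuleCat.{0} F)
    (u : Fin d → ℝ) : Prop :=
  Nonempty ((V.obj u) ≃ₗ[F] F)

/-- `ℝ^d_{V,W} = {u ∈ ℝ^d : V(u) ≅ F and W(u) = 0}`. -/
def RVW (F : Type) [Field F] {d : ℕ} (V W : (Fin d → ℝ) ⥤ ModuleCat.{0} F) :
    Set (Fin d → ℝ) :=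
  {u | ptIsLine F V u ∧ Subsingleton (W.obj u)}

/-- `ℝ^d_V = {u ∈ ℝ^d : V(u) ≅ F}`. -/
def RV (F : Type) [Field F] {d : ℕ} (V : (Fin d → ℝ) ⥤ ModuleCat.{0} F) :
    Set (Fin d → ℝ) :=
  {u | ptIsLine F V u}

/-- `ℰ^small_V(p) = sup_{q ≥ p} ℰ_V([p, q])`. -/
def erosionSmall (F : Type) [Field F] {d : ℕ} (V : (Fin d → ℝ) ⥤ ModuleCat.{0} F)
    (p : Fin d → ℝ) : ℝ :=
  sSup {x : ℝ | ∃ q : Fin d → ℝ, p ≤ q ∧ x = erosionOne F V p q}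

/-- `ℰ^large_V(q) = sup_{p ≤ q} ℰ_V([p, q])`. -/
def erosionLarge (F : Type) [Field F] {d : ℕ} (V : (Fin d → ℝ) ⥤ ModuleCat.{0} F)
    (q : Fin d → ℝ) : ℝ :=
  sSup {x : ℝ | ∃ p : Fin d → ℝ, p ≤ q ∧ x = erosionOne F V p q}

/-- `ℰ*(V, W) = max( sup_{p ∈ ℝ^d_{V,W}} ℰ^small_V(p), sup_{q ∈ ℝ^d_{V,W}} ℰ^large_V(q) )`. -/
def erosionStar (F : Type) [Field F] {d : ℕ} (V W : (Fin d → ℝ) ⥤ ModuleCat.{0} F) : ℝ :=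
  max (sSup {x : ℝ | ∃ p ∈ RVW F V W, x = erosionSmall F V p})
      (sSup {x : ℝ | ∃ q ∈ RVW F V W, x = erosionLarge F V q})

/-- A bounded antichain-decomposable module over `ℝ^d`: an ACD module whose support is a
bounded subset of `ℝ^d`. -/
def IsBoundedACD (F : Type) [Field F] {d : ℕ} (V : (Fin d → ℝ) ⥤ ModuleCat.{0} F) : Prop :=
  IsACD F V ∧ Bornology.IsBounded (suppMod F V)

/-- A persistence module is rank-maximal if the rank of each structure map is the minimum of
the dimensions of its domain and codomain. -/
def RankMaximal (F : Type) [Field F] {P : Type} [PartialOrder P] (V : P ⥤ ModuleCat.{0} F) :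
    Prop :=
  ∀ ⦃p q : P⦄ (h : p ≤ q),
    rankMap F V h = min (Module.finrank F (V.obj p)) (Module.finrank F (V.obj q))

/-- The `i`-th superlevel set of a persistence module: the points of dimension at least `i`. -/
def suppLevel (F : Type) [Field F] {P : Type} [PartialOrder P] (V : P ⥤ ModuleCat.{0} F)
    (i : ℕ) : Set P := {p | i ≤ Module.finrank F (V.obj p)}

theorem suppLevel_convex (F : Type) [Field F] {P : Type} [PartialOrder P]
    (V : P ⥤ ModuleCat.{0} F) (hfd : ∀ p, FiniteDimensional F (V.obj p))
    (hrm : RankMaximal F V) (i : ℕ) : IsConvexSubset (suppLevel F V i) := by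
  intro p r q hp hq hpr hrq
  haveI := hfd r
  haveI := hfd q
  have hfac : V.map (homOfLE (hpr.trans hrq)) = V.map (homOfLE hpr) ≫ V.map (homOfLE hrq) := by
    rw [← V.map_comp]
    rfl
  have h1 : rankMap F V (hpr.trans hrq) ≤ Module.finrank F (V.obj r) := by
    rw [rankMap, hfac]
    calc Module.finrank F (LinearMap.range (V.map (homOfLE hpr) ≫ V.map (homOfLE hrq)).hom)
        ≤ Module.finrank F (LinearMap.range (V.map (homOfLE hrq)).hom) :=
          Submodule.finrank_mono (LinearMap.range_comp_le_range (V.map (homOfLE hpr)).hom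
            (V.map (homOfLE hrq)).hom)
      _ ≤ Module.finrank F (V.obj r) := LinearMap.finrank_range_le _
  exact le_trans (le_trans (le_min hp hq) (hrm (hpr.trans hrq)).ge) h1

/-- The `i`-th superlevel module of a rank-maximal pointwise finite-dimensional persistence
module: the indicator module of the `i`-th superlevel set. -/
def superMod (F : Type) [Field F] {P : Type} [PartialOrder P] (V : P ⥤ ModuleCat.{0} F)
    (hfd : ∀ p, FiniteDimensional F (V.obj p)) (hrm : RankMaximal F V) (i : ℕ) :
    P ⥤ ModuleCat.{0} F :=
  indicatorModule F (suppLevel F V i) (suppLevel_convex F V hfd hrm i)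

open Classical in
theorem finrank_indSub (F : Type) [Field F] {P : Type} (I : Set P) (p : P) :
    Module.finrank F (indSub F I p) = if p ∈ I then 1 else 0 := by
  rw [indSub]
  by_cases h : p ∈ I
  · rw [if_pos h, if_pos h, finrank_top, Module.finrank_self]
  · rw [if_neg h, if_neg h, finrank_bot]

open Classical in
theorem rankMap_indicator (F : Type) [Field F] {P : Type} [PartialOrder P] {I : Set P}
    (hI : IsConvexSubset I) {p q : P} (h : p ≤ q) :
    rankMap F (indicatorModule F I hI) h = if p ∈ I ∧ q ∈ I then 1 else 0 := by
  show Module.finrank F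
      (LinearMap.range (indMap F (indSub F I p) (indSub F I q))) = _
  by_cases hp : p ∈ I
  · by_cases hq : q ∈ I
    · have hle : indSub F I p ≤ indSub F I q := by simp [indSub, hp, hq]
      haveI : FiniteDimensional F (indSub F I p) := by
        rw [indSub, if_pos hp]
        infer_instance
      have e1 : Module.finrank F (LinearMap.range (Submodule.inclusion hle))
          = Module.finrank F (indSub F I p) :=
        LinearMap.finrank_range_of_inj (Submodule.inclusion_injective hle)
      rw [if_pos ⟨hp, hq⟩, indMap, dif_pos hle, e1, finrank_indSub, if_pos hp]
    · haveI : Subsingleton (indSub F I q) := indSub_subsingleton hq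
      haveI : Subsingleton
          (LinearMap.range (indMap F (indSub F I p) (indSub F I q))) := by
        constructor
        intro a b
        apply Subtype.ext
        exact Subsingleton.elim _ _
      rw [if_neg (fun hc => hq hc.2)]
      exact Module.finrank_zero_of_subsingleton
  · have hz : indMap F (indSub F I p) (indSub F I q) = 0 := by
      haveI := indSub_subsingleton (F := F) (I := I) hp
      apply LinearMap.ext
      intro x
      rw [Subsingleton.elim x 0]
      simp
    rw [if_neg (fun hc => hp hc.1), hz, LinearMap.range_zero, finrank_bot]

theorem rkInv_eq_min (F : Type) [Field F] {d : ℕ} (V : (Fin d → ℝ) ⥤ ModuleCat.{0} F)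
    (hrm : RankMaximal F V) {p q : Fin d → ℝ} (h : p ≤ q) :
    rkInv F V p q = min (Module.finrank F (V.obj p)) (Module.finrank F (V.obj q)) := by
  rw [rkInv, dif_pos h]
  exact hrm h

open Classical in
theorem rkInv_superMod (F : Type) [Field F] {d : ℕ} (V : (Fin d → ℝ) ⥤ ModuleCat.{0} F)
    (hfd : ∀ p, FiniteDimensional F (V.obj p)) (hrm : RankMaximal F V) (i : ℕ)
    {p q : Fin d → ℝ} (h : p ≤ q) :
    rkInv F (superMod F V hfd hrm i) p q = if i ≤ rkInv F V p q then 1 else 0 := by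
  classical
  rw [rkInv, dif_pos h]
  show rankMap F (superMod F V hfd hrm i) h = _
  rw [superMod, rankMap_indicator, rkInv_eq_min F V hrm h]
  have : (p ∈ suppLevel F V i ∧ q ∈ suppLevel F V i)
      ↔ i ≤ min (Module.finrank F (V.obj p)) (Module.finrank F (V.obj q)) := by
    simp [suppLevel, le_min_iff]
  rw [if_congr this rfl rfl]

theorem nat_le_iff_levels {a b M : ℕ} (ha : a ≤ M) :
    a ≤ b ↔ ∀ i ∈ Finset.Icc 1 M,
      ((if i ≤ a then (1:ℕ) else 0) ≤ if i ≤ b then 1 else 0) := by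
  constructor
  · intro hab i _
    by_cases hia : i ≤ a
    · rw [if_pos hia, if_pos (hia.trans hab)]
    · simp [hia]
  · intro hall
    rcases Nat.eq_zero_or_pos a with h0 | h1
    · omega
    · have := hall a (Finset.mem_Icc.mpr ⟨h1, ha⟩)
      rw [if_pos le_rfl] at this
      by_contra hc
      rw [if_neg (by omega)] at this
      omega

/-- for pointwise finite-dimensional rank-maximal modules over `ℝ^d` with
bounded support and pointwise dimensions bounded by `M`, a positive `ε` is a feasible erosion
for `(rk_V, rk_W)` if and only if it is a feasible erosion for every pair of superlevel
modules `(rk_{V^(i)}, rk_{W^(i)})`, `i = 1, …, M`. -/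
theorem feasible_iff_superlevel_feasible (F : Type) [Field F] {d : ℕ}
    (V W : (Fin d → ℝ) ⥤ ModuleCat.{0} F)
    (hfdV : ∀ p, FiniteDimensional F (V.obj p)) (hfdW : ∀ p, FiniteDimensional F (W.obj p))
    (hrmV : RankMaximal F V) (hrmW : RankMaximal F W)
    (hbV : Bornology.IsBounded (suppMod F V)) (hbW : Bornology.IsBounded (suppMod F W))
    (M : ℕ)
    (hMV : ∀ p, Module.finrank F (V.obj p) ≤ M) (hMW : ∀ p, Module.finrank F (W.obj p) ≤ M)
    (ε : ℝ) (hε : 0 < ε) :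
    Feasible F V W ε ↔
      ∀ i ∈ Finset.Icc 1 M,
        Feasible F (superMod F V hfdV hrmV i) (superMod F W hfdW hrmW i) ε := by
  classical
  have hthick : ∀ p q : Fin d → ℝ, p ≤ q → (fun j => p j - ε) ≤ (fun j => q j + ε) := by
    intro p q hpq j
    have := hpq j
    dsimp
    linarith
  constructor
  · intro hf i _ p q hpq
    have hp' := hthick p q hpq
    obtain ⟨h1, h2⟩ := hf p q hpq
    constructor
    · show rkInv F (superMod F V hfdV hrmV i) _ _ ≤ _
      rw [rkInv_superMod F V hfdV hrmV i hp', rkInv_superMod F W hfdW hrmW i hpq]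
      have h1' : rkInv F V (fun j => p j - ε) (fun j => q j + ε) ≤ rkInv F W p q := h1
      split_ifs with ha hb
      · exact le_rfl
      · exact absurd (ha.trans h1') hb
      · exact Nat.zero_le _
      · exact le_rfl
    · show rkInv F (superMod F W hfdW hrmW i) _ _ ≤ _
      rw [rkInv_superMod F W hfdW hrmW i hp', rkInv_superMod F V hfdV hrmV i hpq]
      have h2' : rkInv F W (fun j => p j - ε) (fun j => q j + ε) ≤ rkInv F V p q := h2
      split_ifs with ha hb
      · exact le_rfl
      · exact absurd (ha.trans h2') hb
      · exact Nat.zero_le _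
      · exact le_rfl
  · intro hall p q hpq
    have hp' := hthick p q hpq
    constructor
    · show rkInv F V _ _ ≤ rkInv F W p q
      have haM : rkInv F V (fun j => p j - ε) (fun j => q j + ε) ≤ M := by
        rw [rkInv_eq_min F V hrmV hp']
        exact le_trans (min_le_left _ _) (hMV _)
      rw [nat_le_iff_levels haM]
      intro i hi
      have h := (hall i hi p q hpq).1
      rwa [rkShift, rkInv_superMod F V hfdV hrmV i hp',
        rkInv_superMod F W hfdW hrmW i hpq] at h
    · show rkInv F W _ _ ≤ rkInv F V p q
      have haM : rkInv F W (fun j => p j - ε) (fun j => q j + ε) ≤ M := by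
        rw [rkInv_eq_min F W hrmW hp']
        exact le_trans (min_le_left _ _) (hMW _)
      rw [nat_le_iff_levels haM]
      intro i hi
      have h := (hall i hi p q hpq).2
      rwa [rkShift, rkInv_superMod F W hfdW hrmW i hp',
        rkInv_superMod F V hfdV hrmV i hpq] at h

end
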